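/- One-step descent for the z-iterates (appendix lemma for SADOM). Under the stated hypotheses, (1/κ)‖ẑ⁺ − z*‖² + (4/(3κ))‖m⁺‖_P² ≤ (1/κ − π)‖ẑ − z*‖² + (1 − (4χ)⁻¹ + 3κπ/2)·(4/(3κ))‖m‖_P² − 2ν⁻¹⟨y_g + z_g − (y* + z*), z − z*⟩ + κν⁻²(1 + 6χ)‖y_g + z_g‖_P² + 2π‖z_g − z*‖² + (2κπ² − π)‖z_g − z‖². -/

import Mathlib

open MeasureTheory RealInnerProductSpace
open scoped ENNReal

noncomputable section

/-- The space `E = (ℝ^d)^n` with the standard Euclidean inner product. -/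
abbrev Vs (d n : ℕ) : Type := EuclideanSpace ℝ (Fin n × Fin d)

/-- The consensus subspace `L = {(x₁,…,xₙ) : x₁ = ⋯ = xₙ}` of `(ℝ^d)^n`. -/
def consensus (d n : ℕ) : Submodule ℝ (Vs d n) where
  carrier := {x | ∀ i j : Fin n, ∀ k : Fin d, x (i, k) = x (j, k)}
  add_mem' := by
    intro a b ha hb i j k
    simp only [Set.mem_setOf_eq] at ha hb
    simp [PiLp.add_apply, ha i j k, hb i j k]
  zero_mem' := by intro i j k; rfl
  smul_mem' := by
    intro c a ha i j k
    simp only [Set.mem_setOf_eq] at ha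
    simp [PiLp.smul_apply, ha i j k]

/-- Orthogonal projection of `E` onto `L⊥`. -/
def projP (d n : ℕ) (x : Vs d n) : Vs d n :=
  (Submodule.orthogonalProjectionOnto (consensus d n)ᗮ x : Vs d n)

/-- The Kronecker product `W ⊗ I_d` acting on `E = (ℝ^d)^n`. -/
def kron {d n : ℕ} (W : Matrix (Fin n) (Fin n) ℝ) (x : Vs d n) : Vs d n :=
  WithLp.toLp 2 (fun p : Fin n × Fin d => ∑ j, W p.1 j * x (j, p.2))


section SadomHelpers

variable {d n : ℕ}

private lemma projP_mem' (x : Vs d n) : projP d n x ∈ (consensus d n)ᗮ :=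
  (Submodule.orthogonalProjectionOnto _ x).2

private lemma projP_add' (x y : Vs d n) : projP d n (x + y) = projP d n x + projP d n y := by
  simp [projP, map_add]

private lemma projP_smul' (r : ℝ) (x : Vs d n) : projP d n (r • x) = r • projP d n x := by
  simp [projP, _root_.map_smul]

private lemma projP_sub' (x y : Vs d n) : projP d n (x - y) = projP d n x - projP d n y := by
  simp [projP, map_sub]

private lemma projP_eq_self' {x : Vs d n} (hx : x ∈ (consensus d n)ᗮ) : projP d n x = x := by
  simp [projP, Submodule.orthogonalProjectionOnto_mem_subspace_eq_self ⟨x, hx⟩]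

private lemma sub_projP_mem' (x : Vs d n) : x - projP d n x ∈ consensus d n := by
  have h := Submodule.sub_starProjection_mem_orthogonal (K := (consensus d n)ᗮ) x
  rwa [Submodule.orthogonal_orthogonal] at h

private lemma kron_sub' (W : Matrix (Fin n) (Fin n) ℝ) (x y : Vs d n) :
    kron W (x - y) = kron W x - kron W y := by
  ext p
  simp only [kron, PiLp.sub_apply, mul_sub, Finset.sum_sub_distrib]

private lemma rowsum_zero' {W : Matrix (Fin n) (Fin n) ℝ}
    (hWker : ∀ v : Fin n → ℝ, W.mulVec v = 0 ↔ ∃ c, ∀ i, v i = c) (i : Fin n) :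
    ∑ j, W i j = 0 := by
  have h : W.mulVec (fun _ => 1) = 0 := (hWker _).mpr ⟨1, fun _ => rfl⟩
  have := congrFun h i
  simpa [Matrix.mulVec, dotProduct] using this

private lemma kron_zero_of_consensus' (hn : 0 < n) {W : Matrix (Fin n) (Fin n) ℝ}
    (hWker : ∀ v : Fin n → ℝ, W.mulVec v = 0 ↔ ∃ c, ∀ i, v i = c)
    {x : Vs d n} (hx : x ∈ consensus d n) : kron W x = 0 := by
  ext p
  have hx' : ∀ i j : Fin n, ∀ k : Fin d, x (i, k) = x (j, k) := hx
  calc (kron W x) p = ∑ j, W p.1 j * x (⟨0, hn⟩, p.2) :=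
        by simp only [kron]; exact Finset.sum_congr rfl fun j _ => by rw [hx' j ⟨0, hn⟩ p.2]
    _ = (∑ j, W p.1 j) * x (⟨0, hn⟩, p.2) := by rw [Finset.sum_mul]
    _ = 0 := by rw [rowsum_zero' hWker]; ring

private lemma kron_mem' (hn : 0 < n) {W : Matrix (Fin n) (Fin n) ℝ} (hWsymm : W.IsSymm)
    (hWker : ∀ v : Fin n → ℝ, W.mulVec v = 0 ↔ ∃ c, ∀ i, v i = c)
    (x : Vs d n) : kron W x ∈ (consensus d n)ᗮ := by
  rw [Submodule.mem_orthogonal]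
  intro u hu
  have hu' : ∀ i j : Fin n, ∀ k : Fin d, u (i, k) = u (j, k) := hu
  have heq : ⟪u, kron W x⟫ = ∑ i : Fin n, ∑ k : Fin d, u (i, k) * ∑ j, W i j * x (j, k) := by
    rw [PiLp.inner_apply, Fintype.sum_prod_type]
    simp only [kron, Real.inner_apply]
  rw [heq]
  have colsum : ∀ j : Fin n, ∑ i, W i j = 0 := by
    intro j
    have h : ∀ i, W i j = W j i := fun i => (Matrix.IsSymm.apply hWsymm j i)
    simp only [h]
    exact rowsum_zero' hWker j
  calc ∑ i : Fin n, ∑ k : Fin d, u (i, k) * ∑ j, W i j * x (j, k)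
      = ∑ i : Fin n, ∑ k : Fin d, ∑ j : Fin n, u (⟨0, hn⟩, k) * (W i j * x (j, k)) := by
        refine Finset.sum_congr rfl fun i _ => Finset.sum_congr rfl fun k _ => ?_
        rw [hu' i ⟨0, hn⟩ k, Finset.mul_sum]
    _ = ∑ k : Fin d, ∑ j : Fin n, (∑ i : Fin n, W i j) * (u (⟨0, hn⟩, k) * x (j, k)) := by
        rw [Finset.sum_comm]
        refine Finset.sum_congr rfl fun k _ => ?_
        rw [Finset.sum_comm]
        refine Finset.sum_congr rfl fun j _ => ?_
        rw [Finset.sum_mul]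
        exact Finset.sum_congr rfl fun i _ => by ring
    _ = 0 := by simp [colsum]

private lemma expand_norm3 {E : Type*} [NormedAddCommGroup E] [InnerProductSpace ℝ E]
    (s t : ℝ) (x y w : E) :
    ‖x + s • y - t • w‖ ^ 2 = ‖x‖ ^ 2 + s ^ 2 * ‖y‖ ^ 2 + t ^ 2 * ‖w‖ ^ 2
      + 2 * s * ⟪x, y⟫ - 2 * t * ⟪x, w⟫ - 2 * s * t * ⟪y, w⟫ := by
  simp only [← real_inner_self_eq_norm_sq, inner_sub_left, inner_sub_right, inner_add_left,
    inner_add_right, real_inner_smul_left, real_inner_smul_right, real_inner_comm y x,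
    real_inner_comm w x, real_inner_comm w y]
  ring

private lemma expand_norm2 {E : Type*} [NormedAddCommGroup E] [InnerProductSpace ℝ E]
    (s : ℝ) (y w : E) :
    ‖s • y + w‖ ^ 2 = s ^ 2 * ‖y‖ ^ 2 + 2 * s * ⟪y, w⟫ + ‖w‖ ^ 2 := by
  simp only [← real_inner_self_eq_norm_sq, inner_add_left, inner_add_right,
    real_inner_smul_left, real_inner_smul_right, real_inner_comm w y]
  ring

private lemma quad_nonneg' (A B D C P ip : ℝ) (hA : 0 < A) (hB : 0 ≤ B)
    (hdisc : B ^ 2 ≤ 4 * A * D) (hip : ip ≤ C * P) :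
    0 ≤ A * C ^ 2 - B * ip + D * P ^ 2 := by
  have h1 : B * ip ≤ B * (C * P) := mul_le_mul_of_nonneg_left hip hB
  nlinarith [sq_nonneg (2 * A * C - B * P), mul_nonneg (sub_nonneg.2 hdisc) (sq_nonneg P),
    mul_le_mul_of_nonneg_left h1 hA.le]

private lemma final_scalar (κ π ν χ A2 B2 C2 P2 ab ac ap bc bp cp W2 : ℝ)
    (hκ : 0 < κ) (hπ : 0 < π) (hν : 0 < ν) (hχ : 1 ≤ χ)
    (hW2 : W2 ≤ (1 - χ⁻¹) * ((κ * ν⁻¹) ^ 2 * C2 + 2 * (κ * ν⁻¹) * cp + P2))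
    (hS1 : 0 ≤ A2 + B2 + 4 * P2 + 2 * ab + 4 * ap + 4 * bp)
    (hS2 : 0 ≤ π ^ 2 * B2 + 2 * π * ν⁻¹ * bc + ν⁻¹ ^ 2 * C2)
    (hS3 : 0 ≤ (κ * ν⁻¹ ^ 2 * (6 * χ - 7 / 3 + (4 / 3) * χ⁻¹)) * C2
      - (ν⁻¹ * (14 / 3 - (8 / 3) * χ⁻¹)) * cp + (κ⁻¹ * χ⁻¹) * P2) :
    (1 / κ) * (A2 + (κ * π) ^ 2 * B2 + (κ * ν⁻¹) ^ 2 * C2 + 2 * (κ * π) * ab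
        - 2 * (κ * ν⁻¹) * ac - 2 * (κ * π) * (κ * ν⁻¹) * bc)
      + (4 / (3 * κ)) * W2 ≤
    (1 / κ - π) * A2 + (1 - (4 * χ)⁻¹ + 3 * κ * π / 2) * (4 / (3 * κ)) * P2
      - 2 * ν⁻¹ * (ac + cp)
      + κ * ν⁻¹ ^ 2 * (1 + 6 * χ) * C2
      + 2 * π * (A2 + B2 + P2 + 2 * ab + 2 * ap + 2 * bp) + (2 * κ * π ^ 2 - π) * B2 := by
  have hχ0 : (0:ℝ) < χ := lt_of_lt_of_le one_pos hχ
  have h1 : 0 ≤ π * (A2 + B2 + 4 * P2 + 2 * ab + 4 * ap + 4 * bp) := mul_nonneg hπ.le hS1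
  have h2 : 0 ≤ κ * (π ^ 2 * B2 + 2 * π * ν⁻¹ * bc + ν⁻¹ ^ 2 * C2) := mul_nonneg hκ.le hS2
  have h4 : 0 ≤ (4 / (3 * κ)) * ((1 - χ⁻¹) * ((κ * ν⁻¹) ^ 2 * C2 + 2 * (κ * ν⁻¹) * cp + P2) - W2) :=
    mul_nonneg (by positivity) (by linarith)
  have key : ((1 / κ - π) * A2 + (1 - (4 * χ)⁻¹ + 3 * κ * π / 2) * (4 / (3 * κ)) * P2
      - 2 * ν⁻¹ * (ac + cp)
      + κ * ν⁻¹ ^ 2 * (1 + 6 * χ) * C2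
      + 2 * π * (A2 + B2 + P2 + 2 * ab + 2 * ap + 2 * bp) + (2 * κ * π ^ 2 - π) * B2)
      - ((1 / κ) * (A2 + (κ * π) ^ 2 * B2 + (κ * ν⁻¹) ^ 2 * C2 + 2 * (κ * π) * ab
        - 2 * (κ * ν⁻¹) * ac - 2 * (κ * π) * (κ * ν⁻¹) * bc)
      + (4 / (3 * κ)) * W2)
      = π * (A2 + B2 + 4 * P2 + 2 * ab + 4 * ap + 4 * bp)
      + κ * (π ^ 2 * B2 + 2 * π * ν⁻¹ * bc + ν⁻¹ ^ 2 * C2)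
      + ((κ * ν⁻¹ ^ 2 * (6 * χ - 7 / 3 + (4 / 3) * χ⁻¹)) * C2
        - (ν⁻¹ * (14 / 3 - (8 / 3) * χ⁻¹)) * cp + (κ⁻¹ * χ⁻¹) * P2)
      + (4 / (3 * κ)) * ((1 - χ⁻¹) * ((κ * ν⁻¹) ^ 2 * C2 + 2 * (κ * ν⁻¹) * cp + P2) - W2) := by
    field_simp
    ring
  linarith

end SadomHelpers

set_option maxHeartbeats 2000000 in
/-- One-step descent for the z-iterates (appendix lemma for SADOM):
with `z⁺ := z + κπ(z_g − z) − (W ⊗ I_d)(κν⁻¹(y_g + z_g) + m)`,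
`m⁺ := κν⁻¹(y_g + z_g) + m − (W ⊗ I_d)(κν⁻¹(y_g + z_g) + m)`,
`ẑ := z − Pm`, `ẑ⁺ := z⁺ − Pm⁺`, one has
`(1/κ)‖ẑ⁺ − z*‖² + (4/(3κ))‖m⁺‖_P² ≤ (1/κ − π)‖ẑ − z*‖²
  + (1 − (4χ)⁻¹ + 3κπ/2)(4/(3κ))‖m‖_P² − 2ν⁻¹⟪y_g + z_g − (y* + z*), z − z*⟫
  + κν⁻²(1 + 6χ)‖y_g + z_g‖_P² + 2π‖z_g − z*‖² + (2κπ² − π)‖z_g − z‖²`. -/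

theorem z_one_step_descent
    {d n : ℕ} (hd : 0 < d) (hn : 0 < n)
    (W : Matrix (Fin n) (Fin n) ℝ) (hWsymm : W.IsSymm) (hWpsd : W.PosSemidef)
    (hWker : ∀ v : Fin n → ℝ, W.mulVec v = 0 ↔ ∃ c, ∀ i, v i = c)
    (χ : ℝ) (hχ : 1 ≤ χ)
    (hcontr : ∀ u ∈ (consensus d n)ᗮ, ‖kron W u - u‖ ^ 2 ≤ (1 - χ⁻¹) * ‖u‖ ^ 2)
    (κ π ν : ℝ) (hκ : 0 < κ) (hπ : 0 < π) (hν : 0 < ν)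
    (yg zg m : Vs d n)
    (z zstar : Vs d n) (hz : z ∈ (consensus d n)ᗮ) (hzstar : zstar ∈ (consensus d n)ᗮ)
    (ystar : Vs d n) (hyz : ystar + zstar ∈ consensus d n)
    (zp : Vs d n)
    (hzp : zp = z + (κ * π) • (zg - z) - kron W ((κ * ν⁻¹) • (yg + zg) + m))
    (mp : Vs d n)
    (hmp : mp = (κ * ν⁻¹) • (yg + zg) + m - kron W ((κ * ν⁻¹) • (yg + zg) + m))
    (zhat : Vs d n) (hzhat : zhat = z - projP d n m)
    (zhatp : Vs d n) (hzhatp : zhatp = zp - projP d n mp) :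
    (1 / κ) * ‖zhatp - zstar‖ ^ 2 + (4 / (3 * κ)) * ‖projP d n mp‖ ^ 2 ≤
      (1 / κ - π) * ‖zhat - zstar‖ ^ 2
        + (1 - (4 * χ)⁻¹ + 3 * κ * π / 2) * (4 / (3 * κ)) * ‖projP d n m‖ ^ 2
        - 2 * ν⁻¹ * ⟪yg + zg - (ystar + zstar), z - zstar⟫
        + κ * ν⁻¹ ^ 2 * (1 + 6 * χ) * ‖projP d n (yg + zg)‖ ^ 2
        + 2 * π * ‖zg - zstar‖ ^ 2
        + (2 * κ * π ^ 2 - π) * ‖zg - z‖ ^ 2 := by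
  
  have hχ0 : (0:ℝ) < χ := lt_of_lt_of_le one_pos hχ
  set p := projP d n m with hpdef
  set c := projP d n (yg + zg) with hcdef
  set b := zg - z with hbdef
  set a := zhat - zstar with hadef
  have hpmem : p ∈ (consensus d n)ᗮ := projP_mem' m
  have hcmem : c ∈ (consensus d n)ᗮ := projP_mem' _
  have hvmem : (κ * ν⁻¹) • c + p ∈ (consensus d n)ᗮ :=
    Submodule.add_mem _ (Submodule.smul_mem _ _ hcmem) hpmem
  -- projection of u
  have hPu : projP d n ((κ * ν⁻¹) • (yg + zg) + m) = (κ * ν⁻¹) • c + p := by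
    rw [projP_add', projP_smul']
  -- kron of u equals kron of v
  have hkuv : kron W ((κ * ν⁻¹) • (yg + zg) + m) = kron W ((κ * ν⁻¹) • c + p) := by
    have hmem := sub_projP_mem' ((κ * ν⁻¹) • (yg + zg) + m)
    rw [hPu] at hmem
    have h0 := kron_zero_of_consensus' hn hWker hmem
    rw [kron_sub'] at h0
    exact sub_eq_zero.mp h0
  -- projection of mp
  have hPmp : projP d n mp = ((κ * ν⁻¹) • c + p) - kron W ((κ * ν⁻¹) • c + p) := by
    rw [hmp, projP_sub', hPu, projP_eq_self' (kron_mem' hn hWsymm hWker _), hkuv]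
  -- contraction bound
  have hWbound : ‖projP d n mp‖ ^ 2 ≤
      (1 - χ⁻¹) * ((κ * ν⁻¹) ^ 2 * ‖c‖ ^ 2 + 2 * (κ * ν⁻¹) * ⟪c, p⟫ + ‖p‖ ^ 2) := by
    have h1 : ‖projP d n mp‖ ^ 2 ≤ (1 - χ⁻¹) * ‖(κ * ν⁻¹) • c + p‖ ^ 2 := by
      rw [hPmp, norm_sub_rev]
      exact hcontr _ hvmem
    have h2 : ‖(κ * ν⁻¹) • c + p‖ ^ 2
        = (κ * ν⁻¹) ^ 2 * ‖c‖ ^ 2 + 2 * (κ * ν⁻¹) * ⟪c, p⟫ + ‖p‖ ^ 2 := expand_norm2 _ c p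
    rwa [h2] at h1
  -- the updated hat iterate
  have hzhatp' : zhatp - zstar = a + (κ * π) • b - (κ * ν⁻¹) • c := by
    rw [hzhatp, hzp, hPmp, hkuv, hadef, hzhat]
    abel
  have E1 : ‖zhatp - zstar‖ ^ 2 = ‖a‖ ^ 2 + (κ * π) ^ 2 * ‖b‖ ^ 2 + (κ * ν⁻¹) ^ 2 * ‖c‖ ^ 2
      + 2 * (κ * π) * ⟪a, b⟫ - 2 * (κ * ν⁻¹) * ⟪a, c⟫ - 2 * (κ * π) * (κ * ν⁻¹) * ⟪b, c⟫ := by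
    rw [hzhatp']
    exact expand_norm3 _ _ a b c
  -- inner product identity
  have hzzs : z - zstar = a + p := by rw [hadef, hzhat]; abel
  have hinner : ⟪yg + zg - (ystar + zstar), z - zstar⟫ = ⟪a, c⟫ + ⟪c, p⟫ := by
    have hmem1 : yg + zg - (ystar + zstar) - c ∈ consensus d n := by
      have h := Submodule.sub_mem _ (sub_projP_mem' (yg + zg)) hyz
      have he : yg + zg - c - (ystar + zstar) = yg + zg - (ystar + zstar) - c := by abel
      rwa [he] at h
    have hmem2 : z - zstar ∈ (consensus d n)ᗮ := Submodule.sub_mem _ hz hzstar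
    have h0 : ⟪yg + zg - (ystar + zstar) - c, z - zstar⟫ = 0 :=
      (Submodule.mem_orthogonal _ _).mp hmem2 _ hmem1
    rw [inner_sub_left] at h0
    have h1 : ⟪yg + zg - (ystar + zstar), z - zstar⟫ = ⟪c, z - zstar⟫ := by linarith
    rw [h1, hzzs, inner_add_right, real_inner_comm c a]
  have E7 : ‖zg - zstar‖ ^ 2 = ‖a‖ ^ 2 + ‖b‖ ^ 2 + ‖p‖ ^ 2
      + 2 * ⟪a, b⟫ + 2 * ⟪a, p⟫ + 2 * ⟪b, p⟫ := by
    have h7 : zg - zstar = a + (1:ℝ) • b - (-1:ℝ) • p := by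
      rw [hadef, hzhat, hbdef, one_smul, neg_one_smul]
      abel
    rw [h7, expand_norm3]
    ring
  -- the three nonnegative quadratic forms
  have HS1 : 0 ≤ ‖a‖ ^ 2 + ‖b‖ ^ 2 + 4 * ‖p‖ ^ 2 + 2 * ⟪a, b⟫ + 4 * ⟪a, p⟫ + 4 * ⟪b, p⟫ := by
    have h := expand_norm3 (1:ℝ) (-2:ℝ) a b p
    have h0 : (0:ℝ) ≤ ‖a + (1:ℝ) • b - (-2:ℝ) • p‖ ^ 2 := by positivity
    nlinarith [h, h0]
  have HS2 : 0 ≤ π ^ 2 * ‖b‖ ^ 2 + 2 * π * ν⁻¹ * ⟪b, c⟫ + ν⁻¹ ^ 2 * ‖c‖ ^ 2 := by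
    have h := expand_norm2 π b (ν⁻¹ • c)
    have h0 : (0:ℝ) ≤ ‖π • b + ν⁻¹ • c‖ ^ 2 := by positivity
    have h2 : ‖ν⁻¹ • c‖ ^ 2 = ν⁻¹ ^ 2 * ‖c‖ ^ 2 := by
      rw [norm_smul]
      have hv : ‖ν⁻¹‖ = ν⁻¹ := abs_of_pos (inv_pos.2 hν)
      rw [hv]; ring
    rw [real_inner_smul_right, h2] at h
    nlinarith [h, h0]
  have ht0 : 0 < χ⁻¹ := inv_pos.2 hχ0
  have ht1 : χ⁻¹ ≤ 1 := inv_le_one_of_one_le₀ hχ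
  have HS3 : 0 ≤ (κ * ν⁻¹ ^ 2 * (6 * χ - 7 / 3 + (4 / 3) * χ⁻¹)) * ‖c‖ ^ 2
      - (ν⁻¹ * (14 / 3 - (8 / 3) * χ⁻¹)) * ⟪c, p⟫ + (κ⁻¹ * χ⁻¹) * ‖p‖ ^ 2 := by
    apply quad_nonneg'
    · have : (0:ℝ) < 6 * χ - 7 / 3 + (4 / 3) * χ⁻¹ := by nlinarith
      positivity
    · have : (0:ℝ) ≤ 14 / 3 - (8 / 3) * χ⁻¹ := by nlinarith
      positivity
    · have e : 4 * (κ * ν⁻¹ ^ 2 * (6 * χ - 7 / 3 + (4 / 3) * χ⁻¹)) * (κ⁻¹ * χ⁻¹)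
          - (ν⁻¹ * (14 / 3 - (8 / 3) * χ⁻¹)) ^ 2
          = ν⁻¹ ^ 2 * (20 + 140 * χ⁻¹ - 16 * χ⁻¹ ^ 2) / 9 := by
        rw [inv_eq_one_div κ, inv_eq_one_div χ, inv_eq_one_div ν]
        field_simp
        ring
      nlinarith [sq_nonneg ν⁻¹, mul_nonneg (mul_nonneg (sq_nonneg ν⁻¹) ht0.le) (sub_nonneg.2 ht1),
        mul_nonneg (sq_nonneg ν⁻¹) ht0.le]
    · exact real_inner_le_norm c p
  -- put everything together
  rw [E1, hinner, E7]
  have hE8 : ‖zg - z‖ ^ 2 = ‖b‖ ^ 2 := by rw [hbdef]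
  exact final_scalar κ π ν χ (‖a‖ ^ 2) (‖b‖ ^ 2) (‖c‖ ^ 2) (‖p‖ ^ 2)
    (⟪a, b⟫) (⟪a, c⟫) (⟪a, p⟫) (⟪b, c⟫) (⟪b, p⟫) (⟪c, p⟫) (‖projP d n mp‖ ^ 2)
    hκ hπ hν hχ hWbound HS1 HS2 HS3
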